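/- arXiv:1209.2692 — 8 statements merged into one kernel-verified Lean document; each statement's English description precedes it below -/
import Mathlib

section
/- If the trigonometric polynomial B(ξ) = ∑_{k=-p}^{p} b_k e^{-ikξ} is real-valued (equivalently b_{-k} = b_k, real) and B(ξ) ≥ 0 for all ξ ∈ [-π, π], then for every j ≥ 0 and every k, |b_{j,k}| ≤ b_{j,0}, where b_{j,k} are the coefficients of b_j(z) = b(z)b(z^2)⋯b(z^{2^{j-1}}). -/
open Real intervalIntegral

lemma rioul_aux_int_cos (n : ℤ) :
    ∫ ξ in (-Real.pi)..Real.pi, Real.cos (n * ξ) = if n = 0 then 2 * Real.pi else 0 := by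
  rcases eq_or_ne n 0 with h | h
  · simp [h, two_mul]
  · rw [if_neg h]
    have hn : (n : ℝ) ≠ 0 := Int.cast_ne_zero.mpr h
    have := integral_comp_mul_left (a := -Real.pi) (b := Real.pi)
      (fun x => Real.cos x) hn
    rw [this, integral_cos]
    have h1 : Real.sin ((n:ℝ) * Real.pi) = 0 := Real.sin_int_mul_pi n
    have h2 : Real.sin ((n:ℝ) * (-Real.pi)) = 0 := by
      have : (n:ℝ) * (-Real.pi) = ((-n : ℤ) : ℝ) * Real.pi := by push_cast; ring
      rw [this]; exact Real.sin_int_mul_pi (-n)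
    rw [h1, h2]; simp

lemma rioul_aux_int_cos_cos (m k : ℤ) :
    ∫ ξ in (-Real.pi)..Real.pi, Real.cos (m * ξ) * Real.cos (k * ξ) =
      (if m = -k then Real.pi else 0) + (if m = k then Real.pi else 0) := by
  have hpt : ∀ ξ : ℝ, Real.cos (m * ξ) * Real.cos (k * ξ) =
      (Real.cos (((m + k : ℤ) : ℝ) * ξ) + Real.cos (((m - k : ℤ) : ℝ) * ξ)) / 2 := by
    intro ξ
    push_cast
    rw [add_mul, sub_mul, Real.cos_add, Real.cos_sub]
    ring
  rw [integral_congr (fun ξ _ => hpt ξ)]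
  have hi1 : IntervalIntegrable (fun ξ => Real.cos (((m + k : ℤ) : ℝ) * ξ)) MeasureTheory.volume (-Real.pi) Real.pi := by
    apply Continuous.intervalIntegrable; fun_prop
  have hi2 : IntervalIntegrable (fun ξ => Real.cos (((m - k : ℤ) : ℝ) * ξ)) MeasureTheory.volume (-Real.pi) Real.pi := by
    apply Continuous.intervalIntegrable; fun_prop
  rw [integral_div, integral_add hi1 hi2,
    rioul_aux_int_cos (m + k), rioul_aux_int_cos (m - k)]
  have h1 : m + k = 0 ↔ m = -k := by omega
  have h2 : m - k = 0 ↔ m = k := by omega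
  simp only [h1, h2]
  split_ifs <;> ring

lemma rioul_aux_sum_shift (c g : ℤ → ℝ) (q : ℤ) (hc : ∀ m, q < |m| → c m = 0)
    (t L : ℤ) (hL : q + |t| ≤ L) :
    ∑ k ∈ Finset.Icc (-L) L, c (k - t) * g k =
      ∑ m ∈ Finset.Icc (-q) q, c m * g (m + t) := by
  have hmap : ∑ m ∈ Finset.Icc (-q) q, c m * g (m + t) =
      ∑ k ∈ Finset.Icc (-q + t) (q + t), c (k - t) * g k := by
    rw [← Finset.map_add_right_Icc, Finset.sum_map]
    simp [addRightEmbedding]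
  rw [hmap]
  apply (Finset.sum_subset ?_ ?_).symm
  · intro x hx
    simp only [Finset.mem_Icc] at *
    have := abs_le.mp (le_refl |t|)
    omega
  · intro x hx hnx
    simp only [Finset.mem_Icc] at hx hnx
    have : q < |x - t| := by
      rcases abs_cases (x - t) with ⟨h1, h2⟩ | ⟨h1, h2⟩ <;> omega
    rw [hc _ this, zero_mul]

/-- Rioul's lemma: if the symmetric real trigonometric polynomial
`B(ξ) = ∑_k b_k e^{-ikξ} = ∑_k b_k cos(kξ)` is nonnegative on `[-π, π]`, then the
central coefficient of each iterated mask `b_j(z) = b(z) b(z^2) ⋯ b(z^{2^{j-1}})`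
dominates all others: `|b_{j,k}| ≤ b_{j,0}`. -/
theorem rioul_central_coefficient_dominates
    (p : ℕ) (b : ℤ → ℝ)
    (hb : ∀ k : ℤ, (p : ℤ) < |k| → b k = 0)
    (hsym : ∀ k : ℤ, b (-k) = b k)
    (hB : ∀ ξ ∈ Set.Icc (-Real.pi) Real.pi,
      0 ≤ ∑ᶠ k : ℤ, b k * Real.cos (k * ξ))
    (bj : ℕ → ℤ → ℝ)
    (h0 : ∀ k : ℤ, bj 0 k = if k = 0 then 1 else 0)
    (hrec : ∀ (j : ℕ) (k : ℤ), bj (j + 1) k = ∑ᶠ ℓ : ℤ, b (k - 2 * ℓ) * bj j ℓ) :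
    ∀ (j : ℕ) (k : ℤ), |bj j k| ≤ bj j 0 := by
  classical
  -- support bounds
  set N : ℕ → ℤ := fun j => (2 ^ j - 1) * p with hN
  have hNnn : ∀ j, 0 ≤ N j := by
    intro j
    have h2 : (0:ℤ) < 2 ^ j := pow_pos (by norm_num) j
    have : (0:ℤ) ≤ (p:ℤ) := Int.natCast_nonneg p
    simp only [hN]
    nlinarith
  have hNsucc : ∀ j, N (j + 1) = 2 * N j + p := by
    intro j; simp only [hN, pow_succ]; ring
  have hsupp : ∀ j (k : ℤ), N j < |k| → bj j k = 0 := by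
    intro j
    induction j with
    | zero =>
      intro k hk
      rw [h0, if_neg]
      intro h; subst h; simp [hN] at hk
    | succ j ih =>
      intro k hk
      rw [hrec]
      apply finsum_eq_zero_of_forall_eq_zero
      intro ℓ
      by_cases hℓ : N j < |ℓ|
      · rw [ih ℓ hℓ, mul_zero]
      · push_neg at hℓ
        have hkk : (p:ℤ) < |k - 2 * ℓ| := by
          have h1 := abs_sub_abs_le_abs_sub k (2 * ℓ)
          have h2 : |2 * ℓ| = 2 * |ℓ| := by rw [abs_mul]; simp
          have h3 := hNsucc j
          omega
        rw [hb _ hkk, zero_mul]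
  -- window finsets
  set I : ℕ → Finset ℤ := fun j => Finset.Icc (-(N j)) (N j) with hI
  have hmemI : ∀ j (k : ℤ), k ∈ I j ↔ |k| ≤ N j := by
    intro j k
    simp only [hI, Finset.mem_Icc]
    rcases abs_cases k with ⟨h1, h2⟩ | ⟨h1, h2⟩ <;> omega
  have hsupp' : ∀ j (k : ℤ), k ∉ I j → bj j k = 0 := by
    intro j k hk
    exact hsupp j k (by rw [hmemI] at hk; omega)
  have hfs : ∀ j (g : ℤ → ℝ), (∑ᶠ ℓ : ℤ, g ℓ * bj j ℓ) = ∑ ℓ ∈ I j, g ℓ * bj j ℓ := by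
    intro j g
    apply finsum_eq_sum_of_support_subset
    intro ℓ hℓ
    simp only [Function.mem_support] at hℓ
    by_contra hc
    exact hℓ (by rw [hsupp' j ℓ hc, mul_zero])
  -- P and Bf
  set P : Finset ℤ := Finset.Icc (-(p:ℤ)) p with hP
  set Bf : ℝ → ℝ := fun ξ => ∑ m ∈ P, b m * Real.cos (m * ξ) with hBfdef
  have hBf : ∀ ξ : ℝ, (∑ᶠ k : ℤ, b k * Real.cos (k * ξ)) = Bf ξ := by
    intro ξ
    apply finsum_eq_sum_of_support_subset
    intro m hm
    simp only [Function.mem_support] at hm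
    rw [Finset.coe_Icc, Set.mem_Icc]
    by_contra hc
    rw [not_and_or] at hc
    apply hm
    rw [hb m (by rcases abs_cases m with ⟨h1, h2⟩ | ⟨h1, h2⟩ <;> omega), zero_mul]
  have hper : Function.Periodic Bf (2 * Real.pi) := by
    intro ξ
    apply Finset.sum_congr rfl
    intro m _
    have hc : (m:ℝ) * (ξ + 2 * Real.pi) = (m:ℝ) * ξ + (m:ℤ) * (2 * Real.pi) := by
      ring
    rw [hc, Real.cos_add_int_mul_two_pi]
  have hBpos : ∀ ξ : ℝ, 0 ≤ Bf ξ := by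
    intro ξ
    obtain ⟨y, hy, hxy⟩ := hper.exists_mem_Ico (by positivity) ξ (-Real.pi)
    rw [hxy]
    rw [← hBf]
    apply hB
    constructor
    · exact hy.1
    · have := hy.2; linarith [Real.pi_pos]
  -- symmetry of bj
  have hsymj : ∀ j (k : ℤ), bj j (-k) = bj j k := by
    intro j
    induction j with
    | zero => intro k; simp [h0, neg_eq_zero]
    | succ j ih =>
      intro k
      rw [hrec, hrec, hfs j (fun ℓ => b (-k - 2 * ℓ)), hfs j (fun ℓ => b (k - 2 * ℓ))]
      apply Finset.sum_nbij' (fun ℓ => -ℓ) (fun ℓ => -ℓ)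
      · intro a ha; rw [hmemI] at *; simpa using ha
      · intro a ha; rw [hmemI] at *; simpa using ha
      · intro a _; ring
      · intro a _; ring
      · intro a _
        have h1 : k - 2 * (-a) = -(-k - 2 * a) := by ring
        rw [h1, hsym, ih]
  -- the trigonometric polynomials F j
  set F : ℕ → ℝ → ℝ := fun j ξ => ∑ m ∈ I j, bj j m * Real.cos (m * ξ) with hFdef
  have hF0 : ∀ ξ, F 0 ξ = 1 := by
    intro ξ
    have : I 0 = Finset.Icc (0:ℤ) 0 := by simp [hI, hN]
    simp [hFdef, this, h0]
  -- odd sums vanish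
  have hodd : ∀ ξ : ℝ, ∑ m ∈ P, b m * Real.sin (m * ξ) = 0 := by
    intro ξ
    have h1 : ∑ m ∈ P, b m * Real.sin (m * ξ) = ∑ m ∈ P, -(b m * Real.sin (m * ξ)) := by
      apply Finset.sum_nbij' (fun ℓ => -ℓ) (fun ℓ => -ℓ)
      · intro a ha; simp only [hP, Finset.mem_Icc] at *; omega
      · intro a ha; simp only [hP, Finset.mem_Icc] at *; omega
      · intro a _; ring
      · intro a _; ring
      · intro a _
        rw [hsym]
        have : ((-a : ℤ) : ℝ) * ξ = -((a:ℝ) * ξ) := by push_cast; ring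
        rw [this, Real.sin_neg]
        ring
    rw [Finset.sum_neg_distrib] at h1
    linarith
  -- recursion for F
  have hFrec : ∀ j ξ, F (j + 1) ξ = Bf ξ * F j (2 * ξ) := by
    intro j ξ
    have step1 : F (j + 1) ξ =
        ∑ k ∈ I (j + 1), (∑ ℓ ∈ I j, b (k - 2 * ℓ) * bj j ℓ) * Real.cos (k * ξ) := by
      apply Finset.sum_congr rfl
      intro k _
      rw [hrec, hfs j (fun ℓ => b (k - 2 * ℓ))]
    rw [step1]
    have step2 : ∑ k ∈ I (j + 1), (∑ ℓ ∈ I j, b (k - 2 * ℓ) * bj j ℓ) * Real.cos (k * ξ) =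
        ∑ ℓ ∈ I j, bj j ℓ * ∑ k ∈ I (j + 1), b (k - 2 * ℓ) * Real.cos (k * ξ) := by
      simp only [Finset.sum_mul, Finset.mul_sum]
      rw [Finset.sum_comm]
      apply Finset.sum_congr rfl; intro ℓ _
      apply Finset.sum_congr rfl; intro k _
      ring
    rw [step2]
    have step3 : ∀ ℓ ∈ I j, ∑ k ∈ I (j + 1), b (k - 2 * ℓ) * Real.cos (k * ξ) =
        Bf ξ * Real.cos (((2 * ℓ : ℤ) : ℝ) * ξ) := by
      intro ℓ hℓ
      rw [hmemI] at hℓ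
      have hshift := rioul_aux_sum_shift b (fun k => Real.cos (k * ξ)) p hb (2 * ℓ) (N (j+1))
        (by have h2 : |2 * ℓ| = 2 * |ℓ| := by rw [abs_mul]; simp
            have h3 := hNsucc j
            omega)
      rw [hI, hshift]
      have : ∀ m ∈ P, b m * Real.cos (((m + 2 * ℓ : ℤ) : ℝ) * ξ) =
          b m * Real.cos ((m:ℝ) * ξ) * Real.cos (((2 * ℓ : ℤ) : ℝ) * ξ)
          - b m * Real.sin ((m:ℝ) * ξ) * Real.sin (((2 * ℓ : ℤ) : ℝ) * ξ) := by
        intro m _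
        have hcast : ((m + 2 * ℓ : ℤ) : ℝ) * ξ = (m:ℝ) * ξ + ((2 * ℓ : ℤ) : ℝ) * ξ := by
          push_cast; ring
        rw [hcast, Real.cos_add]
        ring
      rw [Finset.sum_congr rfl this, Finset.sum_sub_distrib, ← Finset.sum_mul, ← Finset.sum_mul,
        hodd ξ]
      simp only [hBfdef]
      ring
    have step4 : ∑ ℓ ∈ I j, bj j ℓ * ∑ k ∈ I (j + 1), b (k - 2 * ℓ) * Real.cos (k * ξ) =
        ∑ ℓ ∈ I j, bj j ℓ * (Bf ξ * Real.cos (((2 * ℓ : ℤ) : ℝ) * ξ)) :=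
      Finset.sum_congr rfl (fun ℓ hℓ => by rw [step3 ℓ hℓ])
    rw [step4]
    simp only [hFdef, Finset.mul_sum]
    apply Finset.sum_congr rfl
    intro m _
    have : ((2 * m : ℤ) : ℝ) * ξ = (m:ℝ) * (2 * ξ) := by push_cast; ring
    rw [this]
    ring
  have hFpos : ∀ j ξ, 0 ≤ F j ξ := by
    intro j
    induction j with
    | zero => intro ξ; rw [hF0]; norm_num
    | succ j ih => intro ξ; rw [hFrec]; exact mul_nonneg (hBpos ξ) (ih (2 * ξ))
  -- key integral identity
  have hkey : ∀ j (k : ℤ),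
      ∫ ξ in (-Real.pi)..Real.pi, F j ξ * Real.cos (k * ξ) = 2 * Real.pi * bj j k := by
    intro j k
    have hswap : ∫ ξ in (-Real.pi)..Real.pi, F j ξ * Real.cos (k * ξ) =
        ∑ m ∈ I j, bj j m * ∫ ξ in (-Real.pi)..Real.pi, Real.cos (m * ξ) * Real.cos (k * ξ) := by
      have h1 : ∀ ξ : ℝ, F j ξ * Real.cos (k * ξ) =
          ∑ m ∈ I j, bj j m * (Real.cos (m * ξ) * Real.cos (k * ξ)) := by
        intro ξ
        simp only [hFdef, Finset.sum_mul]
        apply Finset.sum_congr rfl; intro m _; ring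
      rw [integral_congr (fun ξ _ => h1 ξ)]
      rw [integral_finset_sum]
      · apply Finset.sum_congr rfl
        intro m _
        rw [integral_const_mul]
      · intro m _
        apply Continuous.intervalIntegrable
        fun_prop
    rw [hswap]
    have h2 : ∀ m ∈ I j, bj j m * ∫ ξ in (-Real.pi)..Real.pi, Real.cos (m * ξ) * Real.cos (k * ξ)
        = (if m = -k then bj j m * Real.pi else 0) + (if m = k then bj j m * Real.pi else 0) := by
      intro m _
      rw [rioul_aux_int_cos_cos]
      split_ifs <;> ring
    rw [Finset.sum_congr rfl h2, Finset.sum_add_distrib, Finset.sum_ite_eq', Finset.sum_ite_eq']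
    by_cases hk : k ∈ I j
    · have hk' : -k ∈ I j := by rw [hmemI] at *; simpa using hk
      rw [if_pos hk', if_pos hk, hsymj]
      ring
    · have hk' : -k ∉ I j := by rw [hmemI] at *; simpa using hk
      rw [if_neg hk', if_neg hk, hsupp' j k hk]
      ring
  -- conclusion
  intro j k
  have hFc : Continuous (F j) := by
    apply continuous_finset_sum
    intro m _
    fun_prop
  have hint : ∀ k' : ℤ,
      IntervalIntegrable (fun ξ => F j ξ * Real.cos (k' * ξ)) MeasureTheory.volume
        (-Real.pi) Real.pi := by
    intro k'
    apply Continuous.intervalIntegrable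
    exact hFc.mul (by fun_prop)
  have hintF : IntervalIntegrable (F j) MeasureTheory.volume (-Real.pi) Real.pi :=
    hFc.intervalIntegrable _ _
  have hFint : ∫ ξ in (-Real.pi)..Real.pi, F j ξ = 2 * Real.pi * bj j 0 := by
    have := hkey j 0
    simpa using this
  have hle : ∫ ξ in (-Real.pi)..Real.pi, F j ξ * Real.cos (k * ξ) ≤
      ∫ ξ in (-Real.pi)..Real.pi, F j ξ := by
    apply integral_mono_on (by linarith [Real.pi_pos]) (hint k) hintF
    intro ξ _
    calc F j ξ * Real.cos (k * ξ) ≤ F j ξ * 1 :=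
          mul_le_mul_of_nonneg_left (Real.cos_le_one _) (hFpos j ξ)
      _ = F j ξ := mul_one _
  have hge : -(∫ ξ in (-Real.pi)..Real.pi, F j ξ) ≤
      ∫ ξ in (-Real.pi)..Real.pi, F j ξ * Real.cos (k * ξ) := by
    rw [← integral_neg]
    apply integral_mono_on (by linarith [Real.pi_pos]) hintF.neg (hint k)
    intro ξ _
    simp only [Pi.neg_apply]
    have h1 : F j ξ * (-1) ≤ F j ξ * Real.cos (k * ξ) :=
      mul_le_mul_of_nonneg_left (Real.neg_one_le_cos _) (hFpos j ξ)
    linarith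
  rw [hkey j k, hFint] at hle hge
  have hpi : 0 < 2 * Real.pi := by positivity
  rw [abs_le]
  constructor <;> nlinarith
end

section
/- The j-th power of the matrix M = (b_{k-2ℓ})_{k,ℓ=-p+1,…,p-1} is given by M^j = (b_{j, k - 2^j ℓ})_{k,ℓ=-p+1,…,p-1}, where b_{j,m} are the coefficients of b_j(z) = b(z)b(z^2)⋯b(z^{2^{j-1}}). -/
/-- The `j`-th power of the matrix `M = (b_{k-2ℓ})_{k,ℓ = -p+1,…,p-1}` is given by
`M^j = (b_{j, k - 2^j ℓ})_{k,ℓ = -p+1,…,p-1}`, where `b_{j,m}` are the coefficients of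
`b_j(z) = b(z) b(z^2) ⋯ b(z^{2^{j-1}})` (index `i : Fin (2p-1)` corresponds to the
integer `i - (p-1)`). -/
theorem matrix_power_eq_iterated_mask_coefficients
    (p : ℕ) (hp : 1 ≤ p) (b : ℤ → ℝ)
    (hb : ∀ k : ℤ, (p : ℤ) < |k| → b k = 0)
    (bj : ℕ → ℤ → ℝ)
    (h0 : ∀ k : ℤ, bj 0 k = if k = 0 then 1 else 0)
    (hrec : ∀ (j : ℕ) (k : ℤ), bj (j + 1) k = ∑ᶠ ℓ : ℤ, b (k - 2 * ℓ) * bj j ℓ)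
    (M : Matrix (Fin (2 * p - 1)) (Fin (2 * p - 1)) ℝ)
    (hM : ∀ k ℓ : Fin (2 * p - 1),
      M k ℓ = b (((k : ℤ) - ((p : ℤ) - 1)) - 2 * ((ℓ : ℤ) - ((p : ℤ) - 1)))) :
    ∀ (j : ℕ) (k ℓ : Fin (2 * p - 1)),
      (M ^ j) k ℓ = bj j (((k : ℤ) - ((p : ℤ) - 1)) - 2 ^ j * ((ℓ : ℤ) - ((p : ℤ) - 1))) := by
  intro j
  induction j with
  | zero =>
    intro k ℓ
    rw [pow_zero, Matrix.one_apply, h0, pow_zero, one_mul]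
    have hkl : (k = ℓ) ↔ (((k : ℤ) - ((p : ℤ) - 1)) - ((ℓ : ℤ) - ((p : ℤ) - 1)) = 0) := by
      rw [Fin.ext_iff]; omega
    by_cases h : k = ℓ
    · rw [if_pos h, if_pos (hkl.mp h)]
    · rw [if_neg h, if_neg (fun hc => h (hkl.mpr hc))]
  | succ j ih =>
    intro k ℓ
    set k' : ℤ := (k : ℤ) - ((p : ℤ) - 1) with hk'
    set ℓ' : ℤ := (ℓ : ℤ) - ((p : ℤ) - 1) with hℓ'
    rw [pow_succ', Matrix.mul_apply, hrec]
    have e1 : (∑ᶠ m : ℤ, b ((k' - 2 ^ (j + 1) * ℓ') - 2 * m) * bj j m)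
        = ∑ᶠ m : ℤ, b (k' - 2 * m) * bj j (m - 2 ^ j * ℓ') := by
      rw [← finsum_comp_equiv (Equiv.subRight ((2 : ℤ) ^ j * ℓ'))
        (f := fun m : ℤ => b ((k' - 2 ^ (j + 1) * ℓ') - 2 * m) * bj j m)]
      apply finsum_congr
      intro m
      simp only [Equiv.subRight_apply]
      rw [show (k' - 2 ^ (j + 1) * ℓ') - 2 * (m - 2 ^ j * ℓ') = k' - 2 * m by ring]
    rw [e1]
    have hkb : (k : ℕ) < 2 * p - 1 := k.isLt
    have hlb : (ℓ : ℕ) < 2 * p - 1 := ℓ.isLt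
    have hsupp : (Function.support fun m : ℤ => b (k' - 2 * m) * bj j (m - 2 ^ j * ℓ'))
        ⊆ (Finset.image (fun m : Fin (2 * p - 1) => (m : ℤ) - ((p : ℤ) - 1))
            Finset.univ : Finset ℤ) := by
      intro m hm
      have hb0 : b (k' - 2 * m) ≠ 0 := by
        intro h; apply hm; simp [h]
      have habs : |k' - 2 * m| ≤ (p : ℤ) := by
        by_contra h
        exact hb0 (hb _ (lt_of_not_ge h))
      rw [abs_le] at habs
      have hm1 : -((p : ℤ) - 1) ≤ m ∧ m ≤ (p : ℤ) - 1 := by omega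
      simp only [Finset.coe_image, Finset.coe_univ, Set.image_univ, Set.mem_range]
      refine ⟨⟨(m + ((p : ℤ) - 1)).toNat, by omega⟩, ?_⟩
      simp only [Fin.val_mk]
      omega
    rw [finsum_eq_sum_of_support_subset _ hsupp,
      Finset.sum_image (fun a _ c _ h => by rw [Fin.ext_iff]; omega)]
    apply Finset.sum_congr rfl
    intro m _
    rw [hM, ih]
end

section
/- If B(ξ) ≥ 0 for all ξ, then lim_{j→∞} b_{j,0}^{1/j} = ρ, where ρ is the spectral radius of the matrix M = (b_{k-2ℓ})_{k,ℓ=-p+1,…,p-1}. -/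
open Filter Complex intervalIntegral in
lemma exp_int_orth (n : ℤ) :
    (∫ ξ in (0:ℝ)..(2*Real.pi), Complex.exp ((n:ℂ) * ξ * Complex.I)) =
      if n = 0 then ((2*Real.pi : ℝ) : ℂ) else 0 := by
  rcases eq_or_ne n 0 with h | h
  · simp [h]
  · rw [if_neg h]
    have hc : (n:ℂ) * Complex.I ≠ 0 := by
      simp [Complex.ext_iff, h]
    have := integral_exp_mul_complex (a := 0) (b := 2*Real.pi) hc
    have h2 : ∀ ξ : ℝ, (n:ℂ) * ξ * Complex.I = ((n:ℂ) * Complex.I) * ξ := by intro ξ; ring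
    simp only [h2]
    rw [this]
    have h3 : (n:ℂ) * Complex.I * ((2*Real.pi : ℝ) : ℂ) = n * (2 * (Real.pi:ℂ) * Complex.I) := by
      push_cast; ring
    rw [h3, Complex.exp_int_mul_two_pi_mul_I]
    simp

lemma bj_supp (p : ℕ) (b : ℤ → ℝ)
    (hb : ∀ k : ℤ, (p : ℤ) < |k| → b k = 0)
    (bj : ℕ → ℤ → ℝ)
    (h0 : ∀ k : ℤ, bj 0 k = if k = 0 then 1 else 0)
    (hrec : ∀ (j : ℕ) (k : ℤ), bj (j + 1) k = ∑ᶠ ℓ : ℤ, b (k - 2 * ℓ) * bj j ℓ) :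
    ∀ j k, ((2^j - 1) * p : ℤ) < |k| → bj j k = 0 := by
  intro j
  induction j with
  | zero =>
    intro k hk
    simp only [pow_zero] at hk
    rw [h0, if_neg (by intro h; rw [h] at hk; simp at hk)]
  | succ j ih =>
    intro k hk
    rw [hrec]
    apply finsum_eq_zero_of_forall_eq_zero
    intro ℓ
    by_cases hl : ((2^j - 1) * p : ℤ) < |ℓ|
    · rw [ih ℓ hl, mul_zero]
    · rw [hb, zero_mul]
      push_neg at hl
      have h1 := abs_sub_abs_le_abs_sub k (2*ℓ)
      have h2 : |2*ℓ| = 2 * |ℓ| := by rw [abs_mul]; simp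
      have hX : ((2:ℤ)^(j+1) - 1) * p = 2*((2^j - 1)*p) + p := by ring
      rw [hX] at hk
      omega

lemma rec_sum (p : ℕ) (b : ℤ → ℝ)
    (hb : ∀ k : ℤ, (p : ℤ) < |k| → b k = 0)
    (bj : ℕ → ℤ → ℝ)
    (h0 : ∀ k : ℤ, bj 0 k = if k = 0 then 1 else 0)
    (hrec : ∀ (j : ℕ) (k : ℤ), bj (j + 1) k = ∑ᶠ ℓ : ℤ, b (k - 2 * ℓ) * bj j ℓ)
    (j : ℕ) (k : ℤ) (s : Finset ℤ)
    (hs : Finset.Icc (-(((2:ℤ)^j - 1) * p)) (((2:ℤ)^j - 1) * p) ⊆ s) :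
    bj (j+1) k = ∑ ℓ ∈ s, b (k - 2 * ℓ) * bj j ℓ := by
  rw [hrec]
  apply finsum_eq_sum_of_support_subset
  intro ℓ hℓ
  simp only [Function.mem_support] at hℓ
  apply hs
  simp only [Finset.mem_Icc]
  by_contra hc
  push_neg at hc
  have : ((2:ℤ)^j - 1) * p < |ℓ| := by
    rcases abs_cases ℓ with ⟨h1, h2⟩ | ⟨h1, h2⟩ <;> omega
  rw [bj_supp p b hb bj h0 hrec j ℓ this, mul_zero] at hℓ
  exact hℓ rfl

open Complex in
lemma E_prod (p : ℕ) (b : ℤ → ℝ)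
    (hb : ∀ k : ℤ, (p : ℤ) < |k| → b k = 0)
    (bj : ℕ → ℤ → ℝ)
    (h0 : ∀ k : ℤ, bj 0 k = if k = 0 then 1 else 0)
    (hrec : ∀ (j : ℕ) (k : ℤ), bj (j + 1) k = ∑ᶠ ℓ : ℤ, b (k - 2 * ℓ) * bj j ℓ)
    (j : ℕ) (ξ : ℝ) :
    (∑ k ∈ Finset.Icc (-(((2:ℤ)^(j+1) - 1) * p)) (((2:ℤ)^(j+1) - 1) * p),
        (bj (j+1) k : ℂ) * Complex.exp (k * ξ * I))
    = (∑ a ∈ Finset.Icc (-(p:ℤ)) p, (b a : ℂ) * Complex.exp (a * ξ * I)) *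
      (∑ m ∈ Finset.Icc (-(((2:ℤ)^j - 1) * p)) (((2:ℤ)^j - 1) * p),
        (bj j m : ℂ) * Complex.exp (m * (2*ξ) * I)) := by
  set N : ℤ := ((2:ℤ)^j - 1) * p with hNdef
  set N' : ℤ := ((2:ℤ)^(j+1) - 1) * p with hN'def
  have hpow : (0:ℤ) < 2^j := pow_pos (by norm_num) j
  have hNN' : N' = 2*N + p := by rw [hNdef, hN'def]; ring
  have key : ∀ ℓ ∈ Finset.Icc (-N) N,
      (∑ k ∈ Finset.Icc (-N') N', (b (k - 2*ℓ) : ℂ) * Complex.exp (k * ξ * I))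
      = ∑ a ∈ Finset.Icc (-(p:ℤ)) p,
          (b a : ℂ) * (Complex.exp (a * ξ * I) * Complex.exp (ℓ * (2*ξ) * I)) := by
    intro ℓ hℓ
    simp only [Finset.mem_Icc] at hℓ
    have hmap : (Finset.Icc (-(p:ℤ)) p).map (addRightEmbedding (2*ℓ))
        = Finset.Icc (-(p:ℤ) + 2*ℓ) (p + 2*ℓ) := Finset.map_add_right_Icc _ _ _
    have hsub : Finset.Icc (-(p:ℤ) + 2*ℓ) (p + 2*ℓ) ⊆ Finset.Icc (-N') N' := by
      intro x hx
      simp only [Finset.mem_Icc] at hx ⊢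
      omega
    rw [← Finset.sum_subset hsub (fun x hx hx' => ?_)]
    · rw [← hmap, Finset.sum_map]
      refine Finset.sum_congr rfl fun a _ => ?_
      simp only [addRightEmbedding_apply]
      rw [add_sub_cancel_right, ← Complex.exp_add]
      congr 1
      push_cast
      ring
    · rw [hb, Complex.ofReal_zero, zero_mul]
      simp only [Finset.mem_Icc] at hx hx'
      rcases abs_cases (x - 2*ℓ) with ⟨h1, h2⟩ | ⟨h1, h2⟩ <;> omega
  calc (∑ k ∈ Finset.Icc (-N') N', (bj (j+1) k : ℂ) * Complex.exp (k * ξ * I))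
      = ∑ k ∈ Finset.Icc (-N') N', ∑ ℓ ∈ Finset.Icc (-N) N,
          ((b (k - 2*ℓ) : ℂ) * Complex.exp (k * ξ * I)) * (bj j ℓ : ℂ) := by
        refine Finset.sum_congr rfl fun k _ => ?_
        rw [rec_sum p b hb bj h0 hrec j k _ subset_rfl]
        push_cast
        rw [Finset.sum_mul]
        exact Finset.sum_congr rfl fun ℓ _ => by ring
    _ = ∑ ℓ ∈ Finset.Icc (-N) N,
          (∑ k ∈ Finset.Icc (-N') N', (b (k - 2*ℓ) : ℂ) * Complex.exp (k * ξ * I))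
            * (bj j ℓ : ℂ) := by
        rw [Finset.sum_comm]
        exact Finset.sum_congr rfl fun ℓ _ => by rw [Finset.sum_mul]
    _ = ∑ ℓ ∈ Finset.Icc (-N) N, ∑ a ∈ Finset.Icc (-(p:ℤ)) p,
          ((b a : ℂ) * Complex.exp (a * ξ * I)) * ((bj j ℓ : ℂ) * Complex.exp (ℓ * (2*ξ) * I)) := by
        refine Finset.sum_congr rfl fun ℓ hℓ => ?_
        rw [key ℓ hℓ, Finset.sum_mul]
        exact Finset.sum_congr rfl fun a _ => by ring
    _ = _ := by
        rw [Finset.sum_mul_sum, Finset.sum_comm]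

open Complex in
lemma E_real (p : ℕ) (b : ℤ → ℝ)
    (hb : ∀ k : ℤ, (p : ℤ) < |k| → b k = 0)
    (hsym : ∀ k : ℤ, b (-k) = b k)
    (hB : ∀ ξ : ℝ, 0 ≤ ∑ᶠ k : ℤ, b k * Real.cos (k * ξ))
    (bj : ℕ → ℤ → ℝ)
    (h0 : ∀ k : ℤ, bj 0 k = if k = 0 then 1 else 0)
    (hrec : ∀ (j : ℕ) (k : ℤ), bj (j + 1) k = ∑ᶠ ℓ : ℤ, b (k - 2 * ℓ) * bj j ℓ) :
    ∀ (j : ℕ) (ξ : ℝ), ∃ r : ℝ, 0 ≤ r ∧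
      (∑ k ∈ Finset.Icc (-(((2:ℤ)^j - 1) * p)) (((2:ℤ)^j - 1) * p),
        (bj j k : ℂ) * Complex.exp (k * ξ * I)) = r := by
  have hb1 : ∀ ξ : ℝ, ∃ r : ℝ, 0 ≤ r ∧
      (∑ a ∈ Finset.Icc (-(p:ℤ)) p, (b a : ℂ) * Complex.exp (a * ξ * I)) = r := by
    intro ξ
    refine ⟨∑ a ∈ Finset.Icc (-(p:ℤ)) p, b a * Real.cos (a * ξ), ?_, ?_⟩
    · have := hB ξ
      rwa [finsum_eq_sum_of_support_subset _ (s := Finset.Icc (-(p:ℤ)) p) ?_] at this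
      intro x hx
      simp only [Function.mem_support] at hx
      simp only [Finset.coe_Icc, Set.mem_Icc]
      by_contra hc
      push_neg at hc
      have : (p:ℤ) < |x| := by
        rcases abs_cases x with ⟨h1, h2⟩ | ⟨h1, h2⟩ <;> omega
      rw [hb x this, zero_mul] at hx
      exact hx rfl
    · have hsin : ∑ a ∈ Finset.Icc (-(p:ℤ)) p, b a * Real.sin (a * ξ) = 0 := by
        have hS : ∑ a ∈ Finset.Icc (-(p:ℤ)) p, b a * Real.sin (a * ξ)
            = ∑ a ∈ Finset.Icc (-(p:ℤ)) p, -(b a * Real.sin (a * ξ)) := by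
          refine Finset.sum_equiv (Equiv.neg ℤ) (fun i => ?_) (fun i hi => ?_)
          · simp only [Finset.mem_Icc, Equiv.neg_apply]; omega
          · simp only [Equiv.neg_apply]
            rw [hsym]
            push_cast
            rw [neg_mul, Real.sin_neg]
            ring
        rw [Finset.sum_neg_distrib] at hS
        linarith
      have : ∀ a ∈ Finset.Icc (-(p:ℤ)) p,
          (b a : ℂ) * Complex.exp (a * ξ * I)
          = (↑(b a * Real.cos (a * ξ)) : ℂ) + (↑(b a * Real.sin (a * ξ)) : ℂ) * I := by
        intro a _
        have h1 : ((a:ℂ)) * (ξ:ℂ) = ((a * ξ : ℝ) : ℂ) := by push_cast; ring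
        rw [h1, Complex.exp_mul_I, ← Complex.ofReal_cos, ← Complex.ofReal_sin]
        push_cast
        ring
      rw [Finset.sum_congr rfl this, Finset.sum_add_distrib, ← Finset.sum_mul,
        ← Complex.ofReal_sum, ← Complex.ofReal_sum, hsin]
      simp
  intro j
  induction j with
  | zero =>
    intro ξ
    refine ⟨1, zero_le_one, ?_⟩
    norm_num [h0]
  | succ j ih =>
    intro ξ
    rw [E_prod p b hb bj h0 hrec j ξ]
    obtain ⟨r1, hr1, he1⟩ := hb1 ξ
    obtain ⟨r, hr, he⟩ := ih (2*ξ)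
    exact ⟨r1 * r, mul_nonneg hr1 hr, by push_cast at he ⊢; rw [he1, he]⟩

open Complex intervalIntegral in
lemma E_int (p : ℕ) (b : ℤ → ℝ)
    (hb : ∀ k : ℤ, (p : ℤ) < |k| → b k = 0)
    (bj : ℕ → ℤ → ℝ)
    (h0 : ∀ k : ℤ, bj 0 k = if k = 0 then 1 else 0)
    (hrec : ∀ (j : ℕ) (k : ℤ), bj (j + 1) k = ∑ᶠ ℓ : ℤ, b (k - 2 * ℓ) * bj j ℓ)
    (j : ℕ) (k : ℤ) :
    (∫ ξ in (0:ℝ)..(2*Real.pi),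
      (∑ m ∈ Finset.Icc (-(((2:ℤ)^j - 1) * p)) (((2:ℤ)^j - 1) * p),
        (bj j m : ℂ) * Complex.exp (m * ξ * I)) * Complex.exp ((-k:ℂ) * ξ * I))
    = ((2*Real.pi) * bj j k : ℝ) := by
  set N : ℤ := ((2:ℤ)^j - 1) * p with hNdef
  have hcont : ∀ c : ℂ, Continuous fun ξ : ℝ => Complex.exp (c * ξ * I) := by
    intro c
    exact Complex.continuous_exp.comp (by continuity)
  have hfun : ∀ ξ : ℝ,
      (∑ m ∈ Finset.Icc (-N) N, (bj j m : ℂ) * Complex.exp (m * ξ * I))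
          * Complex.exp ((-k:ℂ) * ξ * I)
      = ∑ m ∈ Finset.Icc (-N) N, (bj j m : ℂ) * Complex.exp (((m - k : ℤ):ℂ) * ξ * I) := by
    intro ξ
    rw [Finset.sum_mul]
    refine Finset.sum_congr rfl fun m _ => ?_
    rw [mul_assoc, ← Complex.exp_add]
    congr 2
    push_cast
    ring
  simp only [hfun]
  rw [intervalIntegral.integral_finset_sum]
  · have : ∀ m ∈ Finset.Icc (-N) N,
        (∫ ξ in (0:ℝ)..(2*Real.pi), (bj j m : ℂ) * Complex.exp (((m - k : ℤ):ℂ) * ξ * I))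
        = if m = k then (bj j m : ℂ) * ((2*Real.pi : ℝ):ℂ) else 0 := by
      intro m _
      rw [intervalIntegral.integral_const_mul, exp_int_orth]
      rcases eq_or_ne m k with h | h
      · simp [h]
      · rw [if_neg (by omega), if_neg h, mul_zero]
    rw [Finset.sum_congr rfl this, Finset.sum_ite_eq' (Finset.Icc (-N) N) k
      (fun m => (bj j m : ℂ) * ((2*Real.pi : ℝ):ℂ))]
    by_cases hk : k ∈ Finset.Icc (-N) N
    · rw [if_pos hk]; push_cast; ring
    · rw [if_neg hk]
      have : bj j k = 0 := by
        apply bj_supp p b hb bj h0 hrec j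
        simp only [Finset.mem_Icc] at hk
        rcases abs_cases k with ⟨h1, h2⟩ | ⟨h1, h2⟩ <;> omega
      rw [this]
      norm_num
  · intro m _
    exact (Continuous.intervalIntegrable (by exact continuous_const.mul (hcont _)) _ _)

open Complex intervalIntegral in
lemma rioul (p : ℕ) (b : ℤ → ℝ)
    (hb : ∀ k : ℤ, (p : ℤ) < |k| → b k = 0)
    (hsym : ∀ k : ℤ, b (-k) = b k)
    (hB : ∀ ξ : ℝ, 0 ≤ ∑ᶠ k : ℤ, b k * Real.cos (k * ξ))
    (bj : ℕ → ℤ → ℝ)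
    (h0 : ∀ k : ℤ, bj 0 k = if k = 0 then 1 else 0)
    (hrec : ∀ (j : ℕ) (k : ℤ), bj (j + 1) k = ∑ᶠ ℓ : ℤ, b (k - 2 * ℓ) * bj j ℓ)
    (j : ℕ) (k : ℤ) :
    |bj j k| ≤ bj j 0 ∧ 0 ≤ bj j 0 := by
  set N : ℤ := ((2:ℤ)^j - 1) * p with hNdef
  set E : ℝ → ℂ := fun ξ => ∑ m ∈ Finset.Icc (-N) N, (bj j m : ℂ) * Complex.exp (m * ξ * I)
    with hEdef
  set r : ℝ → ℝ := fun ξ => (E ξ).re with hrdef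
  have hEr : ∀ ξ, E ξ = ((r ξ : ℝ) : ℂ) ∧ 0 ≤ r ξ := by
    intro ξ
    obtain ⟨s, hs, hEs⟩ := E_real p b hb hsym hB bj h0 hrec j ξ
    have : E ξ = (s : ℂ) := hEs
    constructor
    · rw [this]; simp [hrdef, this]
    · simp [hrdef, this, hs]
  have hpi : (0:ℝ) < 2 * Real.pi := by positivity
  -- k = 0 identity
  have h00 : (∫ ξ in (0:ℝ)..(2*Real.pi), r ξ) = (2*Real.pi) * bj j 0 := by
    have h1 := E_int p b hb bj h0 hrec j 0
    have h2 : ∀ ξ:ℝ, E ξ * Complex.exp ((-(0:ℤ):ℂ) * ξ * I) = ((r ξ : ℝ):ℂ) := by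
      intro ξ
      rw [(hEr ξ).1]
      norm_num
    push_cast at h1
    simp only [hEdef] at h2
    rw [intervalIntegral.integral_congr (g := fun ξ => ((r ξ : ℝ):ℂ))
      (fun ξ _ => by simpa using h2 ξ)] at h1
    rw [intervalIntegral.integral_ofReal] at h1
    apply Complex.ofReal_injective
    rw [h1]
    push_cast
    ring
  have hb0 : 0 ≤ bj j 0 := by
    have : 0 ≤ ∫ ξ in (0:ℝ)..(2*Real.pi), r ξ :=
      intervalIntegral.integral_nonneg (by positivity) (fun ξ _ => (hEr ξ).2)
    rw [h00] at this
    nlinarith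
  refine ⟨?_, hb0⟩
  have h1 := E_int p b hb bj h0 hrec j k
  have hnorm : ‖∫ ξ in (0:ℝ)..(2*Real.pi),
      E ξ * Complex.exp ((-k:ℂ) * ξ * I)‖ ≤ ∫ ξ in (0:ℝ)..(2*Real.pi), r ξ := by
    refine le_trans (intervalIntegral.norm_integral_le_integral_norm (by positivity)) ?_
    refine le_of_eq (intervalIntegral.integral_congr fun ξ _ => ?_)
    rw [norm_mul, (hEr ξ).1]
    have : ((-k:ℂ) * ξ * I) = (((-k * ξ : ℝ)):ℂ) * I := by push_cast; ring
    rw [this]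
    rw [Complex.norm_exp_ofReal_mul_I, mul_one,
      Complex.norm_real, Real.norm_eq_abs, _root_.abs_of_nonneg (hEr ξ).2]
  rw [show (∫ ξ in (0:ℝ)..(2*Real.pi), E ξ * Complex.exp ((-k:ℂ) * ξ * I))
      = ((2*Real.pi) * bj j k : ℝ) from h1, h00] at hnorm
  rw [Complex.norm_real, Real.norm_eq_abs, abs_mul, abs_of_pos hpi] at hnorm
  nlinarith

lemma fin_sum_icc (p : ℕ) (hp : 1 ≤ p) (f : ℤ → ℝ) :
    ∑ m : Fin (2*p-1), f ((m:ℤ) - ((p:ℤ)-1))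
      = ∑ m' ∈ Finset.Icc (-((p:ℤ)-1)) ((p:ℤ)-1), f m' := by
  refine Finset.sum_bij' (i := fun (m : Fin (2*p-1)) _ => (m:ℤ) - ((p:ℤ)-1))
    (j := fun m' hm' => (⟨(m' + ((p:ℤ)-1)).toNat, by
      simp only [Finset.mem_Icc] at hm'; omega⟩ : Fin (2*p-1)))
    ?_ ?_ ?_ ?_ ?_
  · intro m _
    simp only [Finset.mem_Icc]
    have := m.isLt
    omega
  · intro m' hm'
    exact Finset.mem_univ _
  · intro m _
    have := m.isLt
    apply Fin.ext
    simp only []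
    omega
  · intro m' hm'
    simp only [Finset.mem_Icc] at hm'
    show (((m' + ((p:ℤ)-1)).toNat : ℕ) : ℤ) - ((p:ℤ)-1) = m'
    omega
  · intro m _
    rfl

lemma Mpow (p : ℕ) (hp : 1 ≤ p) (b : ℤ → ℝ)
    (hb : ∀ k : ℤ, (p : ℤ) < |k| → b k = 0)
    (bj : ℕ → ℤ → ℝ)
    (h0 : ∀ k : ℤ, bj 0 k = if k = 0 then 1 else 0)
    (hrec : ∀ (j : ℕ) (k : ℤ), bj (j + 1) k = ∑ᶠ ℓ : ℤ, b (k - 2 * ℓ) * bj j ℓ)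
    (M : Matrix (Fin (2 * p - 1)) (Fin (2 * p - 1)) ℝ)
    (hM : ∀ k ℓ : Fin (2 * p - 1),
      M k ℓ = b (((k : ℤ) - ((p : ℤ) - 1)) - 2 * ((ℓ : ℤ) - ((p : ℤ) - 1)))) :
    ∀ (j : ℕ) (k ℓ : Fin (2*p-1)),
      (M^j) k ℓ = bj j (((k:ℤ) - ((p:ℤ)-1)) - 2^j * ((ℓ:ℤ) - ((p:ℤ)-1))) := by
  intro j
  induction j with
  | zero =>
    intro k ℓ
    rw [pow_zero, Matrix.one_apply, h0]
    have hk := k.isLt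
    have hl := ℓ.isLt
    by_cases h : k = ℓ
    · rw [if_pos h, if_pos (by rw [h]; ring)]
    · rw [if_neg h, if_neg ?_]
      intro hc
      apply h
      apply Fin.ext
      simp only [pow_zero, one_mul] at hc
      omega
  | succ j ih =>
    intro k ℓ
    rw [pow_succ', Matrix.mul_apply]
    simp only [hM, ih]
    have hkb := k.isLt
    have hlb := ℓ.isLt
    rw [fin_sum_icc p hp (fun m' : ℤ => b (((k:ℤ) - ((p:ℤ)-1)) - 2 * m')
        * bj j (m' - 2^j * ((ℓ:ℤ) - ((p:ℤ)-1)))), hrec]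
    rw [finsum_eq_sum_of_support_subset _
      (s := Finset.Icc (-((p:ℤ)-1) + -(2^j * ((ℓ:ℤ) - ((p:ℤ)-1))))
        (((p:ℤ)-1) + -(2^j * ((ℓ:ℤ) - ((p:ℤ)-1))))) ?_]
    · rw [← Finset.map_add_right_Icc, Finset.sum_map]
      refine (Finset.sum_congr rfl fun m' hm' => ?_).symm
      simp only [addRightEmbedding_apply]
      have h1 : (k:ℤ) - ((p:ℤ)-1) - 2^(j+1) * ((ℓ:ℤ) - ((p:ℤ)-1))
          - 2 * (m' + -(2^j * ((ℓ:ℤ) - ((p:ℤ)-1)))) = (k:ℤ) - ((p:ℤ)-1) - 2 * m' := by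
        ring
      rw [h1]
      congr 1
    · intro x hx
      simp only [Function.mem_support] at hx
      simp only [Finset.coe_Icc, Set.mem_Icc]
      by_contra hcon
      push_neg at hcon
      apply hx
      have h2 : (k:ℤ) - ((p:ℤ)-1) - 2^(j+1) * ((ℓ:ℤ) - ((p:ℤ)-1)) - 2 * x
          = (k:ℤ) - ((p:ℤ)-1) - 2 * (x + 2^j * ((ℓ:ℤ) - ((p:ℤ)-1))) := by
        ring
      rw [h2, hb, zero_mul]
      rcases abs_cases ((k:ℤ) - ((p:ℤ)-1) - 2 * (x + 2^j * ((ℓ:ℤ) - ((p:ℤ)-1)))) with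
        ⟨e1, e2⟩ | ⟨e1, e2⟩ <;> omega

open Filter in
/-- If `B(ξ) = ∑_k b_k e^{-ikξ} = ∑_k b_k cos(kξ) ≥ 0` for all `ξ`, then
`b_{j,0}^{1/j} → ρ` as `j → ∞`, where `ρ` is the spectral radius of the matrix
`M = (b_{k-2ℓ})_{k,ℓ = -p+1,…,p-1}`. -/
theorem central_coefficient_growth_eq_spectral_radius
    (p : ℕ) (hp : 1 ≤ p) (b : ℤ → ℝ)
    (hb : ∀ k : ℤ, (p : ℤ) < |k| → b k = 0)
    (hsym : ∀ k : ℤ, b (-k) = b k)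
    (hB : ∀ ξ : ℝ, 0 ≤ ∑ᶠ k : ℤ, b k * Real.cos (k * ξ))
    (bj : ℕ → ℤ → ℝ)
    (h0 : ∀ k : ℤ, bj 0 k = if k = 0 then 1 else 0)
    (hrec : ∀ (j : ℕ) (k : ℤ), bj (j + 1) k = ∑ᶠ ℓ : ℤ, b (k - 2 * ℓ) * bj j ℓ)
    (M : Matrix (Fin (2 * p - 1)) (Fin (2 * p - 1)) ℝ)
    (hM : ∀ k ℓ : Fin (2 * p - 1),
      M k ℓ = b (((k : ℤ) - ((p : ℤ) - 1)) - 2 * ((ℓ : ℤ) - ((p : ℤ) - 1)))) :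
    Tendsto (fun j : ℕ => (bj j 0) ^ ((j : ℝ)⁻¹)) atTop
      (nhds ((spectralRadius ℂ (M.map (fun x : ℝ => (x : ℂ)))).toReal)) := by
  classical
  letI : NormedRing (Matrix (Fin (2*p-1)) (Fin (2*p-1)) ℂ) := Matrix.linftyOpNormedRing
  letI : NormedAlgebra ℂ (Matrix (Fin (2*p-1)) (Fin (2*p-1)) ℂ) := Matrix.linftyOpNormedAlgebra
  letI : CompleteSpace (Matrix (Fin (2*p-1)) (Fin (2*p-1)) ℂ) :=
    FiniteDimensional.complete ℂ _
  set A : Matrix (Fin (2*p-1)) (Fin (2*p-1)) ℂ := M.map (fun x : ℝ => (x:ℂ)) with hAdef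
  have hG := spectrum.pow_nnnorm_pow_one_div_tendsto_nhds_spectralRadius A
  have hρ : spectralRadius ℂ A ≠ ⊤ := by
    refine ne_top_of_le_ne_top ?_ (spectrum.spectralRadius_le_pow_nnnorm_pow_one_div ℂ A 0)
    exact ENNReal.mul_ne_top
      (ENNReal.rpow_ne_top_of_nonneg (by norm_num) ENNReal.coe_ne_top)
      (ENNReal.rpow_ne_top_of_nonneg (by norm_num) ENNReal.coe_ne_top)
  have hGr : Tendsto (fun j : ℕ => ‖A^j‖ ^ ((j:ℝ)⁻¹)) atTop
      (nhds ((spectralRadius ℂ A).toReal)) := by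
    have h1 := (ENNReal.tendsto_toReal hρ).comp hG
    have h2 : ∀ j : ℕ, (((‖A^j‖₊ : ENNReal) ^ (1/(j:ℝ) : ℝ)).toReal) = ‖A^j‖ ^ ((j:ℝ)⁻¹) := by
      intro j
      rw [← ENNReal.toReal_rpow, ENNReal.coe_toReal, coe_nnnorm, one_div]
    exact Tendsto.congr h2 h1
  -- entry formula
  have hPow : ∀ j : ℕ, A ^ j = (M ^ j).map (fun x : ℝ => (x:ℂ)) := by
    intro j
    have hA2 : A = Complex.ofRealHom.mapMatrix M := rfl
    rw [hA2, ← map_pow]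
    rfl
  have hEntry : ∀ (j : ℕ) (k ℓ : Fin (2*p-1)),
      (A ^ j) k ℓ = ((bj j (((k:ℤ) - ((p:ℤ)-1)) - 2^j * ((ℓ:ℤ) - ((p:ℤ)-1))) : ℝ) : ℂ) := by
    intro j k ℓ
    rw [hPow j, Matrix.map_apply, Mpow p hp b hb bj h0 hrec M hM j k ℓ]
  have hR := rioul p b hb hsym hB bj h0 hrec
  have hn1 : p - 1 < 2*p - 1 := by omega
  set c0 : Fin (2*p-1) := ⟨p-1, hn1⟩ with hc0def
  have hc0 : ((c0:ℕ):ℤ) - ((p:ℤ)-1) = 0 := by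
    simp only [hc0def]
    push_cast [Nat.cast_sub hp]
    ring
  have hcenter : ∀ j : ℕ, (A ^ j) c0 c0 = ((bj j 0 : ℝ) : ℂ) := by
    intro j
    rw [hEntry j c0 c0, hc0]
    norm_num
  have hnpos : (0:ℝ) < ((2*p-1 : ℕ) : ℝ) := by
    have : 1 ≤ 2*p-1 := by omega
    exact_mod_cast Nat.lt_of_lt_of_le Nat.zero_lt_one this
  -- lower bound : bj j 0 ≤ ‖A^j‖
  have hlow : ∀ j : ℕ, bj j 0 ≤ ‖A ^ j‖ := by
    intro j
    have h1 : bj j 0 ≤ ‖(A ^ j) c0 c0‖ := by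
      rw [hcenter j, Complex.norm_real, Real.norm_eq_abs]
      exact le_abs_self _
    have h2 : ‖(A ^ j) c0 c0‖ ≤ ∑ ℓ : Fin (2*p-1), ‖(A ^ j) c0 ℓ‖ :=
      Finset.single_le_sum (fun ℓ _ => norm_nonneg _) (Finset.mem_univ c0)
    have h3 : ∑ ℓ : Fin (2*p-1), ‖(A ^ j) c0 ℓ‖ ≤ ‖A ^ j‖ := by
      rw [Matrix.linfty_opNorm_def]
      have h4 : (fun i => ∑ ℓ : Fin (2*p-1), ‖(A ^ j) i ℓ‖₊) c0
          ≤ (Finset.univ : Finset (Fin (2*p-1))).sup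
            (fun i => ∑ ℓ : Fin (2*p-1), ‖(A ^ j) i ℓ‖₊) :=
        Finset.le_sup (f := fun i => ∑ ℓ : Fin (2*p-1), ‖(A ^ j) i ℓ‖₊) (Finset.mem_univ c0)
      calc ∑ ℓ : Fin (2*p-1), ‖(A ^ j) c0 ℓ‖
          = ((∑ ℓ : Fin (2*p-1), ‖(A ^ j) c0 ℓ‖₊ : NNReal) : ℝ) := by
            push_cast; rfl
        _ ≤ _ := by exact_mod_cast h4
    linarith
  -- upper bound : ‖A^j‖ ≤ n * bj j 0
  have hup : ∀ j : ℕ, ‖A ^ j‖ ≤ ((2*p-1 : ℕ) : ℝ) * bj j 0 := by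
    intro j
    rw [Matrix.linfty_opNorm_def]
    have hnn : ∀ (i ℓ : Fin (2*p-1)), ‖(A ^ j) i ℓ‖₊ ≤ (bj j 0).toNNReal := by
      intro i ℓ
      rw [← NNReal.coe_le_coe, coe_nnnorm, Real.coe_toNNReal _ (hR j 0).2,
        hEntry j i ℓ, Complex.norm_real, Real.norm_eq_abs]
      exact (hR j _).1
    have hrow : ∀ i : Fin (2*p-1), ∑ ℓ : Fin (2*p-1), ‖(A ^ j) i ℓ‖₊
        ≤ (2*p-1) • (bj j 0).toNNReal := by
      intro i
      have := Finset.sum_le_card_nsmul Finset.univ (fun ℓ => ‖(A ^ j) i ℓ‖₊)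
        ((bj j 0).toNNReal) (fun ℓ _ => hnn i ℓ)
      simpa using this
    have hsup : (Finset.univ : Finset (Fin (2*p-1))).sup
        (fun i => ∑ ℓ : Fin (2*p-1), ‖(A ^ j) i ℓ‖₊) ≤ (2*p-1) • (bj j 0).toNNReal :=
      Finset.sup_le (fun i _ => hrow i)
    calc ((Finset.univ.sup (fun i => ∑ ℓ : Fin (2*p-1), ‖(A ^ j) i ℓ‖₊) : NNReal) : ℝ)
        ≤ (((2*p-1) • (bj j 0).toNNReal : NNReal) : ℝ) := by exact_mod_cast hsup
      _ = ((2*p-1 : ℕ) : ℝ) * bj j 0 := by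
          push_cast [Real.coe_toNNReal _ (hR j 0).2]
          ring
  -- limit of the constant factor
  have hden : Tendsto (fun j : ℕ => ((2*p-1 : ℕ) : ℝ) ^ ((j:ℝ)⁻¹)) atTop (nhds 1) := by
    have hexp : Tendsto (fun j : ℕ => ((j:ℝ)⁻¹)) atTop (nhds 0) :=
      tendsto_inv_atTop_nhds_zero_nat
    have hc := (Real.continuousAt_const_rpow (b := (0:ℝ)) (ne_of_gt hnpos)).tendsto.comp hexp
    simpa [Function.comp_def, Real.rpow_zero] using hc
  have hdiv : Tendsto (fun j : ℕ => (‖A ^ j‖ / ((2*p-1 : ℕ) : ℝ)) ^ ((j:ℝ)⁻¹)) atTop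
      (nhds ((spectralRadius ℂ A).toReal)) := by
    have h1 : ∀ j : ℕ, (‖A ^ j‖ / ((2*p-1 : ℕ) : ℝ)) ^ ((j:ℝ)⁻¹)
        = ‖A ^ j‖ ^ ((j:ℝ)⁻¹) / (((2*p-1 : ℕ) : ℝ)) ^ ((j:ℝ)⁻¹) := by
      intro j
      exact Real.div_rpow (norm_nonneg _) hnpos.le _
    have h2 := Tendsto.congr (fun j => (h1 j).symm) (Tendsto.div hGr hden one_ne_zero)
    simpa using h2
  -- squeeze
  refine tendsto_of_tendsto_of_tendsto_of_le_of_le hdiv hGr ?_ ?_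
  · intro j
    apply Real.rpow_le_rpow (by positivity) ?_ (by positivity)
    rw [div_le_iff₀ hnpos]
    linarith [hup j]
  · intro j
    exact Real.rpow_le_rpow (hR j 0).2 (hlow j) (by positivity)
end

section
/- The spectral radius of the 2×2 matrix (1/8)[[38, 6], [-18, -18]] equals 9/2, and consequently the quintic Dubuc–Deslauriers scheme has Hölder regularity 5 - log₂(9/2). -/
open scoped NNReal ENNReal

open scoped NNReal in
lemma qdd_det (z : ℂ) :
    ((algebraMap ℂ (Matrix (Fin 2) (Fin 2) ℂ)) z
      - (1 / 8 : ℂ) • !![(38 : ℂ), 6; -18, -18]).det = (z - 9/2) * (z + 2) := by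
  norm_num [Matrix.det_fin_two, Matrix.algebraMap_matrix_apply]
  ring

open scoped ENNReal in
/-- The spectral radius of the `2 × 2` folded matrix `(1/8)[[38, 6], [-18, -18]]` of the
quintic Dubuc–Deslauriers scheme equals `9/2` (so that scheme has Hölder regularity
`5 - log₂(9/2)`). -/
theorem quintic_dubuc_deslauriers_spectral_radius :
    spectralRadius ℂ ((1 / 8 : ℂ) • !![(38 : ℂ), 6; -18, -18]) = (9 / 2 : ℝ≥0∞) := by
  have hspec : spectrum ℂ ((1 / 8 : ℂ) • !![(38 : ℂ), 6; -18, -18])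
      = {(9/2 : ℂ), (-2 : ℂ)} := by
    ext z
    rw [spectrum.mem_iff, Matrix.isUnit_iff_isUnit_det, isUnit_iff_ne_zero, not_not,
      qdd_det, mul_eq_zero, sub_eq_zero, Set.mem_insert_iff, Set.mem_singleton_iff,
      add_eq_zero_iff_eq_neg]
  rw [spectralRadius, hspec]
  rw [show ({(9/2 : ℂ), (-2 : ℂ)} : Set ℂ) = insert (9/2 : ℂ) {(-2 : ℂ)} from rfl,
    iSup_insert, iSup_singleton]
  have h1 : ‖(9/2 : ℂ)‖₊ = (9/2 : ℝ≥0) := by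
    rw [nnnorm_div]; norm_num [← NNReal.coe_inj]
  have h2 : ‖(-2 : ℂ)‖₊ = (2 : ℝ≥0) := by
    rw [nnnorm_neg]; norm_num [← NNReal.coe_inj]
  rw [h1, h2, sup_eq_left.mpr (ENNReal.coe_le_coe.mpr (by rw [← NNReal.coe_le_coe]; norm_num))]
  norm_num [← ENNReal.coe_inj, ← NNReal.coe_inj]
end

section
/- For all integers m ≥ 1, 1 ≤ ℓ ≤ m-1, and all s ∈ [0,1]: ∑_{k=0}^{ℓ} C(m-1+k, k) s^k ≤ ((m+ℓ)/ℓ) · ∑_{k=0}^{ℓ-1} C(m-1+k, k) s^k. -/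
open Finset in
lemma pseudo_spline_aux (m' ℓ : ℕ) :
    ℓ * (m' + ℓ).choose ℓ = (m' + 1) * ∑ k ∈ range ℓ, (m' + k).choose k := by
  induction ℓ with
  | zero => simp
  | succ n ih =>
    rw [sum_range_succ, Nat.mul_add, ← ih]
    have h := Nat.add_one_mul_choose_eq (m' + n) n
    have h2 : (m' + (n + 1)).choose (n + 1) = (m' + n + 1).choose (n + 1) := by
      ring_nf
    rw [h2]
    nlinarith [h, Nat.choose_pos (show n ≤ m' + n by omega)]

open Finset in
/-- Key inequality in Theorem 7.2(i): for integers `m ≥ 1`, `1 ≤ ℓ ≤ m-1`, and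
`s ∈ [0,1]`,
`∑_{k=0}^{ℓ} C(m-1+k, k) s^k ≤ ((m+ℓ)/ℓ) ∑_{k=0}^{ℓ-1} C(m-1+k, k) s^k`. -/
theorem pseudo_spline_factor_ratio_ell
    (m ℓ : ℕ) (hm : 1 ≤ m) (hℓ1 : 1 ≤ ℓ) (hℓ : ℓ ≤ m - 1)
    (s : ℝ) (hs : s ∈ Set.Icc (0 : ℝ) 1) :
    ∑ k ∈ range (ℓ + 1), ((m - 1 + k).choose k : ℝ) * s ^ k ≤
      (((m : ℝ) + ℓ) / ℓ) * ∑ k ∈ range ℓ, ((m - 1 + k).choose k : ℝ) * s ^ k := by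
  obtain ⟨hs0, hs1⟩ := hs
  obtain ⟨m', rfl⟩ : ∃ m', m = m' + 1 := ⟨m - 1, by omega⟩
  simp only [Nat.add_sub_cancel] at *
  have hℓpos : (0 : ℝ) < ℓ := by exact_mod_cast hℓ1
  have key : (ℓ : ℝ) * ((m' + ℓ).choose ℓ : ℝ) * s ^ ℓ ≤
      ((m' : ℝ) + 1) * ∑ k ∈ range ℓ, ((m' + k).choose k : ℝ) * s ^ k := by
    calc (ℓ : ℝ) * ((m' + ℓ).choose ℓ : ℝ) * s ^ ℓ
        = (((m' : ℝ) + 1) * ∑ k ∈ range ℓ, ((m' + k).choose k : ℝ)) * s ^ ℓ := by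
          have h4 : (ℓ : ℝ) * ((m' + ℓ).choose ℓ : ℝ)
              = ((m' : ℝ) + 1) * ∑ k ∈ range ℓ, ((m' + k).choose k : ℝ) := by
            exact_mod_cast pseudo_spline_aux m' ℓ
          rw [h4]
      _ = ∑ k ∈ range ℓ, ((m' : ℝ) + 1) * ((m' + k).choose k : ℝ) * s ^ ℓ := by
          rw [mul_sum, sum_mul]
      _ ≤ ∑ k ∈ range ℓ, ((m' : ℝ) + 1) * ((m' + k).choose k : ℝ) * s ^ k := by
          apply sum_le_sum
          intro k hk
          have hk' : k ≤ ℓ := (mem_range.mp hk).le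
          have : s ^ ℓ ≤ s ^ k := pow_le_pow_of_le_one hs0 hs1 hk'
          have hpos : (0 : ℝ) ≤ ((m' : ℝ) + 1) * ((m' + k).choose k : ℝ) := by positivity
          nlinarith
      _ = ((m' : ℝ) + 1) * ∑ k ∈ range ℓ, ((m' + k).choose k : ℝ) * s ^ k := by
          rw [mul_sum]; exact sum_congr rfl fun k _ => by ring
  rw [sum_range_succ, div_mul_eq_mul_div, le_div_iff₀ hℓpos]
  push_cast
  nlinarith [key]
end

section
/- For all integers m ≥ 1, 0 ≤ ℓ ≤ m-1, and all s ∈ [0,1]: ∑_{k=0}^{ℓ} C(m+k, k) s^k ≤ ((m+ℓ)/m) · ∑_{k=0}^{ℓ} C(m-1+k, k) s^k. -/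
lemma aux_choose (n k : ℕ) : (n+1) * (n+1+k).choose k = (n+1+k) * (n+k).choose k := by
  have h := Nat.add_one_mul_choose_eq (n+k) n
  rw [Nat.choose_symm_add] at h
  have h2 : (n+k+1).choose (n+1) = (n+1+k).choose k := by
    rw [show n+k+1 = (n+1)+k by ring, Nat.choose_symm_add]
  rw [h2] at h
  simpa [mul_comm, add_comm, add_assoc, add_left_comm] using h.symm

open Finset in
/-- Key inequality in Theorem 7.2(ii): for integers `m ≥ 1`, `0 ≤ ℓ ≤ m-1`, and
`s ∈ [0,1]`,
`∑_{k=0}^{ℓ} C(m+k, k) s^k ≤ ((m+ℓ)/m) ∑_{k=0}^{ℓ} C(m-1+k, k) s^k`. -/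
theorem pseudo_spline_factor_ratio_m
    (m ℓ : ℕ) (hm : 1 ≤ m) (hℓ : ℓ ≤ m - 1)
    (s : ℝ) (hs : s ∈ Set.Icc (0 : ℝ) 1) :
    ∑ k ∈ range (ℓ + 1), ((m + k).choose k : ℝ) * s ^ k ≤
      (((m : ℝ) + ℓ) / m) * ∑ k ∈ range (ℓ + 1), ((m - 1 + k).choose k : ℝ) * s ^ k := by
  obtain ⟨hs0, hs1⟩ := hs
  have hm' : (0:ℝ) < m := by exact_mod_cast hm
  rw [Finset.mul_sum]
  apply Finset.sum_le_sum
  intro k hk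
  have hk' : (k:ℝ) ≤ ℓ := by exact_mod_cast Nat.lt_succ_iff.mp (Finset.mem_range.mp hk)
  rw [div_mul_eq_mul_div, le_div_iff₀ hm']
  have key : (m:ℝ) * (m+k).choose k = ((m:ℝ)+k) * (m-1+k).choose k := by
    obtain ⟨n, rfl⟩ := Nat.exists_eq_add_of_le hm
    have h := aux_choose n k
    have e1 : 1 + n - 1 = n := by omega
    rw [e1, show 1+n = n+1 by ring]
    exact_mod_cast h
  nlinarith [pow_nonneg hs0 k, mul_nonneg (Nat.cast_nonneg ((m-1+k).choose k) : (0:ℝ) ≤ _) (pow_nonneg hs0 k)]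
end

section
/- For all integers m ≥ 1 and all s ∈ [0,1]: ∑_{k=0}^{m} C(m+k, k) s^k ≤ (2(2m+1)/(m+1)) · ∑_{k=0}^{m-1} C(m-1+k, k) s^k. -/
open Finset

-- hockey stick
lemma hockey (r : ℕ) : ∀ n : ℕ, ∑ k ∈ range (n+1), (r+k).choose k = (r+n+1).choose n := by
  intro n
  induction n with
  | zero => simp
  | succ n ih =>
    rw [Finset.sum_range_succ, ih]
    have e : r + (n+1) = r + n + 1 := by ring
    rw [e, Nat.choose_succ_succ' (r+n+1) n]

-- column identity
lemma colid (n k : ℕ) : (n+k+1) * (n+k).choose k = ((n+1+k).choose k) * (n+1) := by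
  have h := Nat.add_one_mul_choose_eq (n+k) n
  have h1 : (n+k).choose n = (n+k).choose k := by
    rw [← Nat.choose_symm (by omega : n ≤ n+k)]
    congr 1; omega
  have h2 : (n+k+1).choose (n+1) = (n+1+k).choose k := by
    rw [← Nat.choose_symm (by omega : n+1 ≤ n+k+1)]
    congr 1 <;> omega
  rw [h1, h2] at h
  simpa [Nat.succ_eq_add_one] using h

lemma aux1 (n k : ℕ) (hk : k ≤ n) :
    (n+2) * ((n+1+k).choose k) ≤ (2*(2*n+3)) * ((n+k).choose k) := by
  refine Nat.le_of_mul_le_mul_left ?_ (show 0 < n+1 by omega)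
  calc (n+1) * ((n+2) * ((n+1+k).choose k))
      = (n+2) * (((n+1+k).choose k) * (n+1)) := by ring
    _ = (n+2) * ((n+k+1) * ((n+k).choose k)) := by rw [← colid]
    _ = ((n+2)*(n+k+1)) * ((n+k).choose k) := by ring
    _ ≤ ((n+1)*(2*(2*n+3))) * ((n+k).choose k) := by
        apply Nat.mul_le_mul_right
        nlinarith
    _ = (n+1) * ((2*(2*n+3)) * ((n+k).choose k)) := by ring

lemma aux2R (n : ℕ) :
    ((n:ℝ)+2) * ∑ k ∈ range (n+2), ((n+1+k).choose k : ℝ)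
      = (2*(2*(n:ℝ)+3)) * ∑ k ∈ range (n+1), ((n+k).choose k : ℝ) := by
  have hA : (∑ k ∈ range (n+2), ((n+1+k).choose k : ℝ))
      = (((n+1)+(n+1)+1).choose (n+1) : ℝ) := by
    exact_mod_cast congrArg (Nat.cast (R := ℝ)) (hockey (n+1) (n+1))
  have hB : (∑ k ∈ range (n+1), ((n+k).choose k : ℝ)) = ((n+n+1).choose n : ℝ) := by
    exact_mod_cast congrArg (Nat.cast (R := ℝ)) (hockey n n)
  rw [hA, hB]
  have h := Nat.add_one_mul_choose_eq (2*n+2) (n+1)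
  -- h : (2*n+2+1) * (2*n+2).choose (n+1) = (2*n+2+1).choose (n+1+1) * (n+1+1)
  have e1 : (2*n+2+1).choose (n+1+1) = ((n+1)+(n+1)+1).choose (n+1) := by
    rw [← Nat.choose_symm (by omega : n+1+1 ≤ 2*n+2+1)]
    congr 1 <;> omega
  have e2 : (2*n+2).choose (n+1) = 2 * ((n+n+1).choose n) := by
    have e : 2*n+2 = (2*n+1)+1 := by ring
    rw [e, Nat.choose_succ_succ' (2*n+1) n]
    have h2 : (2*n+1).choose (n+1) = (2*n+1).choose n := by
      rw [← Nat.choose_symm (by omega : n+1 ≤ 2*n+1)]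
      congr 1; omega
    have e3 : (2*n+1).choose n = (n+n+1).choose n := by congr 1; omega
    omega
  rw [e1, e2] at h
  have hR : ((2*n+2+1 : ℕ):ℝ) * ((2 * ((n+n+1).choose n) : ℕ):ℝ)
      = ((((n+1)+(n+1)+1).choose (n+1) : ℕ):ℝ) * ((n+1+1 : ℕ):ℝ) := by
    exact_mod_cast congrArg (Nat.cast (R := ℝ)) h
  push_cast at hR
  linarith

open Finset in
/-- Key inequality in Theorem 7.2(iii): for all integers `m ≥ 1` and `s ∈ [0,1]`,
`∑_{k=0}^{m} C(m+k, k) s^k ≤ (2(2m+1)/(m+1)) ∑_{k=0}^{m-1} C(m-1+k, k) s^k`.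
This shows the regularity of the Dubuc–Deslauriers family increases with mask size. -/
theorem dubuc_deslauriers_factor_comparison
    (m : ℕ) (hm : 1 ≤ m) (s : ℝ) (hs : s ∈ Set.Icc (0 : ℝ) 1) :
    ∑ k ∈ range (m + 1), ((m + k).choose k : ℝ) * s ^ k ≤
      (2 * (2 * (m : ℝ) + 1) / ((m : ℝ) + 1)) *
        ∑ k ∈ range m, ((m - 1 + k).choose k : ℝ) * s ^ k := by
  obtain ⟨n, rfl⟩ : ∃ n, m = n + 1 := ⟨m - 1, by omega⟩
  obtain ⟨hs0, hs1⟩ := hs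
  simp only [Nat.add_sub_cancel]
  rw [div_mul_eq_mul_div, le_div_iff₀ (by push_cast; positivity)]
  push_cast
  -- Goal: (∑ k ∈ range (n+2), C(n+1+k,k) s^k) * (n+1+1) ≤ 2*(2*(n+1)+1) * ∑ ...
  set B := ∑ k ∈ range (n+1), ((n+k).choose k : ℝ) * s ^ k with hB
  rw [Finset.sum_range_succ]
  set L := ∑ k ∈ range (n+1), ((n+1+k).choose k : ℝ) * s ^ k with hL
  set t := (((n+1+(n+1)).choose (n+1) : ℕ) : ℝ) with ht
  -- key: termwise lower bound on the difference polynomial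
  have hd : ∀ k ∈ range (n+1),
      (0:ℝ) ≤ (2*(2*(n:ℝ)+3)) * ((n+k).choose k : ℝ) - ((n:ℝ)+2) * ((n+1+k).choose k : ℝ) := by
    intro k hk
    have h := aux1 n k (by simpa using Nat.lt_succ_iff.mp (Finset.mem_range.mp hk))
    have hc : (((n+2) * ((n+1+k).choose k) : ℕ) : ℝ) ≤ (((2*(2*n+3)) * ((n+k).choose k) : ℕ) : ℝ) := by
      exact_mod_cast h
    push_cast at hc
    linarith
  have hpow : ∀ k ∈ range (n+1), s ^ n ≤ s ^ k := by
    intro k hk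
    exact pow_le_pow_of_le_one hs0 hs1 (Nat.lt_succ_iff.mp (Finset.mem_range.mp hk))
  have hsum_ge :
      (∑ k ∈ range (n+1), ((2*(2*(n:ℝ)+3)) * ((n+k).choose k : ℝ)
          - ((n:ℝ)+2) * ((n+1+k).choose k : ℝ))) * s ^ n
        ≤ ∑ k ∈ range (n+1), ((2*(2*(n:ℝ)+3)) * ((n+k).choose k : ℝ)
          - ((n:ℝ)+2) * ((n+1+k).choose k : ℝ)) * s ^ k := by
    rw [Finset.sum_mul]
    apply Finset.sum_le_sum
    intro k hk
    exact mul_le_mul_of_nonneg_left (hpow k hk) (hd k hk)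
  have hsplit : ∑ k ∈ range (n+1), ((2*(2*(n:ℝ)+3)) * ((n+k).choose k : ℝ)
        - ((n:ℝ)+2) * ((n+1+k).choose k : ℝ)) * s ^ k
      = 2*(2*(n:ℝ)+3) * B - ((n:ℝ)+2) * L := by
    rw [hB, hL, Finset.mul_sum, Finset.mul_sum, ← Finset.sum_sub_distrib]
    exact Finset.sum_congr rfl fun k _ => by ring
  have hDsum : ∑ k ∈ range (n+1), ((2*(2*(n:ℝ)+3)) * ((n+k).choose k : ℝ)
        - ((n:ℝ)+2) * ((n+1+k).choose k : ℝ)) = ((n:ℝ)+2) * t := by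
    have h2 := aux2R n
    rw [Finset.sum_range_succ (f := fun k => ((n+1+k).choose k : ℝ))] at h2
    rw [Finset.sum_sub_distrib, ← Finset.mul_sum, ← Finset.mul_sum]
    have hsum1 : (∑ k ∈ range (n+1), ((n+1+k).choose k : ℝ)) + t
        = ∑ k ∈ range (n+1), ((n+1+k).choose k : ℝ) + ((n+1+(n+1)).choose (n+1) : ℝ) := by
      rw [ht]
    nlinarith [h2]
  have ht0 : (0:ℝ) ≤ t := by rw [ht]; positivity
  have hpow2 : s ^ (n+1) ≤ s ^ n := pow_le_pow_of_le_one hs0 hs1 (by omega)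
  have hfinal : ((n:ℝ)+2) * t * s ^ (n+1) ≤ 2*(2*(n:ℝ)+3) * B - ((n:ℝ)+2) * L := by
    calc ((n:ℝ)+2) * t * s ^ (n+1) ≤ ((n:ℝ)+2) * t * s ^ n := by
          apply mul_le_mul_of_nonneg_left hpow2; positivity
      _ ≤ 2*(2*(n:ℝ)+3) * B - ((n:ℝ)+2) * L := by
          rw [← hDsum]; rw [← hsplit] at *; exact hsum_ge
  nlinarith [hfinal]
end

section
/- For all integers m ≥ 1, 1 ≤ ℓ ≤ m-1, and s ∈ [0,1]: ∑_{k=0}^{ℓ} C(m-1/2+k, k) s^k ≤ ((m+ℓ+1/2)/ℓ) · ∑_{k=0}^{ℓ-1} C(m-1/2+k, k) s^k, where C(x,k) is the generalized binomial coefficient. -/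
open Finset

/-- The generalized binomial coefficient `C(x, k) = x(x-1)⋯(x-k+1)/k!` for real `x`. -/
noncomputable def gchoose (x : ℝ) (k : ℕ) : ℝ :=
  (∏ i ∈ range k, (x - i)) / (k.factorial : ℝ)

lemma gchoose_succ (x : ℝ) (k : ℕ) :
    gchoose (x + 1) (k + 1) = ((x + 1) / (k + 1)) * gchoose x k := by
  unfold gchoose
  rw [Finset.prod_range_succ']
  have : (∏ i ∈ range k, (x + 1 - (i + 1 : ℕ))) = ∏ i ∈ range k, (x - i) := by
    apply Finset.prod_congr rfl
    intro i _
    push_cast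
    ring
  rw [this, Nat.factorial_succ]
  push_cast [Nat.factorial_succ]
  field_simp
  ring

lemma gchoose_nonneg (x : ℝ) (k : ℕ) (hx : ∀ i : ℕ, i < k → 0 ≤ x - i) :
    0 ≤ gchoose x k := by
  unfold gchoose
  apply div_nonneg
  · exact Finset.prod_nonneg fun i hi => hx i (Finset.mem_range.mp hi)
  · positivity

/-- Key estimate in Theorem 7.3(i): for integers `m ≥ 1`, `1 ≤ ℓ ≤ m-1`, and `s ∈ [0,1]`,
`∑_{k=0}^{ℓ} C(m-1/2+k, k) s^k ≤ ((m+ℓ+1/2)/ℓ) ∑_{k=0}^{ℓ-1} C(m-1/2+k, k) s^k`. -/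
theorem dual_pseudo_spline_factor_ratio_ell
    (m ℓ : ℕ) (hm : 1 ≤ m) (hℓ1 : 1 ≤ ℓ) (hℓ : ℓ ≤ m - 1)
    (s : ℝ) (hs : s ∈ Set.Icc (0 : ℝ) 1) :
    ∑ k ∈ range (ℓ + 1), gchoose ((m : ℝ) - 1 / 2 + k) k * s ^ k ≤
      (((m : ℝ) + ℓ + 1 / 2) / ℓ) * ∑ k ∈ range ℓ, gchoose ((m : ℝ) - 1 / 2 + k) k * s ^ k := by
  obtain ⟨hs0, hs1⟩ := hs
  set a : ℕ → ℝ := fun k => gchoose ((m : ℝ) - 1 / 2 + k) k * s ^ k with ha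
  have hm1 : (1 : ℝ) ≤ m := by exact_mod_cast hm
  have ha_nonneg : ∀ k, 0 ≤ a k := by
    intro k
    apply mul_nonneg _ (pow_nonneg hs0 k)
    apply gchoose_nonneg
    intro i hi
    have : (i : ℝ) < k := by exact_mod_cast hi
    nlinarith
  -- recurrence
  have hrec : ∀ k : ℕ, a (k + 1) = (((m : ℝ) + 1 / 2 + k) / (k + 1)) * s * a k := by
    intro k
    have h1 : ((m : ℝ) - 1 / 2 + (k + 1 : ℕ)) = ((m : ℝ) - 1 / 2 + k) + 1 := by
      push_cast; ring
    simp only [ha, h1, gchoose_succ]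
    rw [pow_succ]
    ring_nf
  -- main claim by induction
  have claim : ∀ j : ℕ, (j : ℝ) * a j ≤ ((m : ℝ) + 1 / 2) * ∑ k ∈ range j, a k := by
    intro j
    induction j with
    | zero => simp
    | succ j ih =>
      have hstep : ((j : ℝ) + 1) * a (j + 1) ≤ ((m : ℝ) + 1 / 2 + j) * a j := by
        rw [hrec j]
        have hkpos : (0 : ℝ) < (j : ℝ) + 1 := by positivity
        have h2 : (0 : ℝ) ≤ ((m : ℝ) + 1 / 2 + j) / (j + 1) * a j :=
          mul_nonneg (div_nonneg (by nlinarith) hkpos.le) (ha_nonneg j)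
        have : (((m : ℝ) + 1 / 2 + j) / (j + 1)) * s * a j ≤
            (((m : ℝ) + 1 / 2 + j) / (j + 1)) * a j := by nlinarith
        calc ((j : ℝ) + 1) * ((((m : ℝ) + 1 / 2 + j) / (j + 1)) * s * a j)
            ≤ ((j : ℝ) + 1) * ((((m : ℝ) + 1 / 2 + j) / (j + 1)) * a j) := by
              apply mul_le_mul_of_nonneg_left this hkpos.le
          _ = ((m : ℝ) + 1 / 2 + j) * a j := by field_simp
      have hsum : ∑ k ∈ range (j + 1), a k = (∑ k ∈ range j, a k) + a j :=
        Finset.sum_range_succ a j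
      push_cast
      rw [hsum]
      nlinarith [ha_nonneg j]
  have hℓpos : (0 : ℝ) < (ℓ : ℝ) := by exact_mod_cast hℓ1
  have hsum : ∑ k ∈ range (ℓ + 1), a k = (∑ k ∈ range ℓ, a k) + a ℓ :=
    Finset.sum_range_succ a ℓ
  show ∑ k ∈ range (ℓ + 1), a k ≤ (((m : ℝ) + ℓ + 1 / 2) / ℓ) * ∑ k ∈ range ℓ, a k
  rw [hsum, div_mul_eq_mul_div, le_div_iff₀ hℓpos]
  have := claim ℓ
  have hS : 0 ≤ ∑ k ∈ range ℓ, a k := Finset.sum_nonneg fun k _ => ha_nonneg k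
  nlinarith
end
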